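/- The kernel element found modulo 5 does not lie in the kernel modulo 7: over the Laurent polynomial ring (Z/7Z)[v,v^{-1}], the ordered product of the Burau matrices B_{i_1}*...*B_{i_162} along the word W = (1,3,1,3,1,3,2,2,1,3,3,2,2,1,3,3,2,2,2,1,3,1,3,2,1,2,1,3,1,3,2,1,2,1,3,1,3,2,2,2,1,3,3,2,2,1,3,3,2,2,1,3,1,3,1,2,3,2,1,1,3,2,1,2,1,3,1,3,2,1,2,1,3,1,3,2,2,1,3,2,2,1,3,2,2,2,1,3,3,2,2,1,3,3,2,2,1,3,1,2,3,2,1,1,3,2,1,2,1,3,1,3,2,1,2,1,3,1,2,3,2,1,1,3,2,2,1,3,3,2,2,1,3,3,2,2,2,1,3,2,2,1,3,1,2,3,2,2,1,3,1,2,3,2,2,1,3,1,2,3,2,1) is NOT equal to -v^{108} * J, where J is the 3x3 antidiagonal permutation matrix. -/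

import Mathlib

open LaurentPolynomial

/-- The reduced Burau matrices for the 4-strand braid group over `R[v,v⁻¹]` (with `v = T 1`),
indexed so that `BurauB R k` is the Burau matrix of the Artin generator `s_k` for `k = 1, 2, 3`. -/
noncomputable def BurauB (R : Type) [CommRing R] : ℕ → Matrix (Fin 3) (Fin 3) (LaurentPolynomial R)
  | 1 => !![-(T 1)^2, -(T 1), 0; 0, 1, 0; 0, 0, 1]
  | 2 => !![1, 0, 0; -(T 1), -(T 1)^2, -(T 1); 0, 0, 1]
  | 3 => !![1, 0, 0; 0, 1, 0; 0, -(T 1), -(T 1)^2]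
  | _ => 1

/-- The 3×3 antidiagonal permutation matrix `J`. -/
noncomputable def Jmat (R : Type) [CommRing R] : Matrix (Fin 3) (Fin 3) (LaurentPolynomial R) :=
  !![0, 0, 1; 0, 1, 0; 1, 0, 0]

/-- The word `W` in the Artin generators (of length 162). -/
def Wword : List ℕ :=
  [1, 3, 1, 3, 1, 3, 2, 2, 1, 3, 3, 2, 2, 1, 3, 3, 2, 2, 2, 1, 3, 1,
   3, 2, 1, 2, 1, 3, 1, 3, 2, 1, 2, 1, 3, 1, 3, 2, 2, 2, 1, 3, 3,
   2, 2, 1, 3, 3, 2, 2, 1, 3, 1, 3, 1, 2, 3, 2, 1, 1, 3, 2, 1, 2, 1, 3,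
   1, 3, 2, 1, 2, 1, 3, 1, 3, 2, 2, 1, 3, 2, 2, 1, 3, 2, 2, 2, 1,
   3, 3, 2, 2, 1, 3, 3, 2, 2, 1, 3, 1, 2, 3, 2, 1, 1, 3, 2, 1, 2, 1,
   3, 1, 3, 2, 1, 2, 1, 3, 1, 2, 3, 2, 1, 1, 3, 2, 2, 1, 3, 3, 2,
   2, 1, 3, 3, 2, 2, 2, 1, 3, 2, 2, 1, 3, 1, 2, 3, 2, 2, 1, 3, 1, 2, 3,
   2, 2, 1, 3, 1, 2, 3, 2, 1]

/-- The unit `2` in `ZMod 7`. -/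
def twoUnit : (ZMod 7)ˣ := ⟨2, 4, by decide, by decide⟩

/-- Evaluation of a Laurent polynomial over `ZMod 7` at `v = 2`. -/
noncomputable def evalTwo : LaurentPolynomial (ZMod 7) →ₐ[ZMod 7] ZMod 7 :=
  (AddMonoidAlgebra.lift (ZMod 7) (ZMod 7) ℤ)
    ((Units.coeHom (ZMod 7)).comp (zpowersHom (ZMod 7)ˣ twoUnit))

lemma evalTwo_T (n : ℤ) : evalTwo (T n) = ((twoUnit ^ n : (ZMod 7)ˣ) : ZMod 7) := by
  simp only [evalTwo, LaurentPolynomial.T, AddMonoidAlgebra.lift_single, one_smul,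
    MonoidHom.coe_comp, Function.comp_apply, zpowersHom_apply, toAdd_ofAdd,
    Units.coeHom_apply]

lemma evalTwo_T_one : evalTwo (T 1) = 2 := by
  rw [evalTwo_T]; decide

lemma evalTwo_T_two : evalTwo (T 2) = 2 ^ 2 := by
  rw [evalTwo_T]; decide

/-- The Burau matrices evaluated at `v = 2` over `ZMod 7`. -/
def BurauN : ℕ → Matrix (Fin 3) (Fin 3) (ZMod 7)
  | 1 => !![-(2:ZMod 7)^2, -2, 0; 0, 1, 0; 0, 0, 1]
  | 2 => !![1, 0, 0; -2, -(2:ZMod 7)^2, -2; 0, 0, 1]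
  | 3 => !![1, 0, 0; 0, 1, 0; 0, -2, -(2:ZMod 7)^2]
  | _ => 1

lemma map_BurauB (k : ℕ) :
    (BurauB (ZMod 7) k).map evalTwo = BurauN k := by
  match k with
  | 0 => ext i j; fin_cases i <;> fin_cases j <;>
      simp [BurauB, BurauN, Matrix.map_apply, Matrix.one_apply]
  | 1 => ext i j; fin_cases i <;> fin_cases j <;>
      simp [BurauB, BurauN, Matrix.map_apply, evalTwo_T_one, evalTwo_T_two, Matrix.vecHead, Matrix.vecTail]
  | 2 => ext i j; fin_cases i <;> fin_cases j <;>
      simp [BurauB, BurauN, Matrix.map_apply, evalTwo_T_one, evalTwo_T_two, Matrix.vecHead, Matrix.vecTail]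
  | 3 => ext i j; fin_cases i <;> fin_cases j <;>
      simp [BurauB, BurauN, Matrix.map_apply, evalTwo_T_one, evalTwo_T_two, Matrix.vecHead, Matrix.vecTail]
  | (n+4) => ext i j; fin_cases i <;> fin_cases j <;>
      simp [BurauB, BurauN, Matrix.map_apply, Matrix.one_apply]

set_option maxRecDepth 100000 in
/-- Over `(ℤ/7ℤ)[v,v⁻¹]`, the product of the Burau matrices along the word `W` is NOT
equal to `-v^108 · J`: the kernel element found modulo 5 does not lie in the kernel modulo 7. -/
theorem burau_word_product_mod_seven_ne :
    (Wword.map (BurauB (ZMod 7))).prod ≠ (-(T 108 : LaurentPolynomial (ZMod 7))) • Jmat (ZMod 7) := by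
  intro h
  have h2 := congrArg (evalTwo.toRingHom.mapMatrix) h
  rw [map_list_prod, List.map_map] at h2
  have hL : (List.map (⇑(RingHom.mapMatrix evalTwo.toRingHom) ∘ BurauB (ZMod 7)) Wword)
      = Wword.map BurauN := by
    rw [List.map_eq_map_iff]
    intro k _
    simpa [RingHom.mapMatrix_apply] using map_BurauB k
  rw [hL] at h2
  have hT108 : evalTwo (T 108) = 1 := by
    rw [evalTwo_T]; decide
  have hR : (RingHom.mapMatrix evalTwo.toRingHom)
      ((-(T 108 : LaurentPolynomial (ZMod 7))) • Jmat (ZMod 7))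
      = ((-1 : ZMod 7)) • !![0, 0, 1; 0, 1, 0; 1, 0, 0] := by
    ext i j
    fin_cases i <;> fin_cases j <;>
      simp [RingHom.mapMatrix_apply, Matrix.map_apply, Jmat, Matrix.smul_apply, hT108, Matrix.vecHead, Matrix.vecTail]
  rw [hR] at h2
  exact absurd h2 (by decide)
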